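/- Lévy's zero-one law: for every bounded below global variable f : Ω → ℝ̄ and every situation s, the event {ω ∈ Ω : liminf_{n→∞} E_V(f | ω^n) ≥ f(ω)} is strictly almost sure within Γ(s). -/

import Mathlib

open Filter Topology

noncomputable section

/-- Addition on the extended reals with the convention `(+∞) + (−∞) = (−∞) + (+∞) = +∞`. -/
def eadd (a b : EReal) : EReal := if a = ⊤ ∨ b = ⊤ then ⊤ else a + b

/-- An extended real variable is bounded below. -/
def BddBelowF {Y : Type*} (f : Y → EReal) : Prop := ∃ M : ℝ, ∀ y, (M : EReal) ≤ f y

/-- (E1): constants are preserved. -/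
def UE1 {Y : Type*} (E : (Y → EReal) → EReal) : Prop :=
  ∀ c : ℝ, E (fun _ => (c : EReal)) = (c : EReal)

/-- (E2): sub-additivity on bounded below variables. -/
def UE2 {Y : Type*} (E : (Y → EReal) → EReal) : Prop :=
  ∀ f g : Y → EReal, BddBelowF f → BddBelowF g →
    E (fun y => eadd (f y) (g y)) ≤ eadd (E f) (E g)

/-- (E3): positive homogeneity on bounded below variables. -/
def UE3 {Y : Type*} (E : (Y → EReal) → EReal) : Prop :=
  ∀ l : ℝ, 0 < l → ∀ f : Y → EReal, BddBelowF f →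
    E (fun y => (l : EReal) * f y) = (l : EReal) * E f

/-- (E4): monotonicity on bounded below variables. -/
def UE4 {Y : Type*} (E : (Y → EReal) → EReal) : Prop :=
  ∀ f g : Y → EReal, BddBelowF f → BddBelowF g → (∀ y, f y ≤ g y) → E f ≤ E g

/-- (E5): continuity with respect to non-decreasing sequences of non-negative variables. -/
def UE5 {Y : Type*} (E : (Y → EReal) → EReal) : Prop :=
  ∀ (fs : ℕ → Y → EReal) (f : Y → EReal),
    (∀ n y, 0 ≤ fs n y) → (∀ n y, fs n y ≤ fs (n + 1) y) →
    (∀ y, Tendsto (fun n => fs n y) atTop (𝓝 (f y))) →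
    Tendsto (fun n => E (fs n)) atTop (𝓝 (E f))

/-- An upper expectation: a map satisfying (E1)–(E5). -/
def IsUpperExpectation {Y : Type*} (E : (Y → EReal) → EReal) : Prop :=
  UE1 E ∧ UE2 E ∧ UE3 E ∧ UE4 E ∧ UE5 E

/-- The situation formed by the first `n` states of the path `ω`. -/
def pfx {X : Type*} (ω : ℕ → X) (n : ℕ) : List X := List.ofFn (fun i : Fin n => ω i)

/-- The cylinder event of all paths that go through the situation `s`. -/
def Gamma {X : Type*} (s : List X) : Set (ℕ → X) := {ω | pfx ω s.length = s}

/-- A process is bounded below. -/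
def BddBelowP {X : Type*} (M : List X → EReal) : Prop := ∃ B : ℝ, ∀ t, (B : EReal) ≤ M t

/-- A supermartingale for the imprecise probabilities tree `Q`. -/
def IsSupermartingale {X : Type*} (Q : List X → (X → EReal) → EReal)
    (M : List X → EReal) : Prop :=
  ∀ s : List X, Q s (fun x => M (s ++ [x])) ≤ M s

/-- The pathwise limit inferior of a process. -/
def liminfP {X : Type*} (M : List X → EReal) (ω : ℕ → X) : EReal :=
  Filter.liminf (fun n => M (pfx ω n)) atTop

/-- The game-theoretic upper expectation `E_V(f | s)`. -/
def upExp {X : Type*} (Q : List X → (X → EReal) → EReal)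
    (f : (ℕ → X) → EReal) (s : List X) : EReal :=
  sInf {x : EReal | ∃ M : List X → EReal, IsSupermartingale Q M ∧ BddBelowP M ∧
    (∀ ω ∈ Gamma s, f ω ≤ liminfP M ω) ∧ M s = x}

/-- An event `A` is strictly almost sure within `Γ(s)`: some `s`-test supermartingale
converges to `+∞` on every path of `Γ(s)` outside `A`. -/
def StrictlyAS {X : Type*} (Q : List X → (X → EReal) → EReal) (s : List X)
    (A : Set (ℕ → X)) : Prop :=
  ∃ T : List X → EReal, IsSupermartingale Q T ∧ (∀ t, 0 ≤ T t) ∧ T s = 1 ∧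
    ∀ ω ∈ Gamma s, ω ∉ A → Tendsto (fun n => T (pfx ω n)) atTop (𝓝 (⊤ : EReal))

/-- An `n`-measurable global variable only depends on the first `n` states. -/
def NMeasurable {X : Type*} (n : ℕ) (f : (ℕ → X) → EReal) : Prop :=
  ∀ ω ω' : ℕ → X, pfx ω n = pfx ω' n → f ω = f ω'

/-- A finitary global variable is `n`-measurable for some `n`. -/
def Finitary {X : Type*} (f : (ℕ → X) → EReal) : Prop := ∃ n : ℕ, NMeasurable n f

/-- The bounded below global variables that are pointwise limits of finitary variables. -/
def VbLim {X : Type*} : Set ((ℕ → X) → EReal) :=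
  {f | BddBelowF f ∧ ∃ gs : ℕ → (ℕ → X) → EReal, (∀ n, Finitary (gs n)) ∧
    ∀ ω, Tendsto (fun n => gs n ω) atTop (𝓝 (f ω))}

set_option linter.unusedSectionVars false
namespace Levy01

attribute [local instance] Classical.propDecidable

lemma ne_bot_of_real_le {r : ℝ} {x : EReal} (h : (r : EReal) ≤ x) : x ≠ ⊥ := by
  intro hx; rw [hx, le_bot_iff] at h; exact (EReal.coe_ne_bot r) h

lemma nonneg_ne_bot {x : EReal} (h : 0 ≤ x) : x ≠ ⊥ := by
  intro hx; rw [hx, le_bot_iff] at h; simp at h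

lemma eadd_eq_add {a b : EReal} (ha : a ≠ ⊥) (hb : b ≠ ⊥) : eadd a b = a + b := by
  unfold eadd
  rcases eq_or_ne a ⊤ with rfl | ha'
  · simp [EReal.top_add_of_ne_bot hb]
  rcases eq_or_ne b ⊤ with rfl | hb'
  · simp [EReal.add_top_of_ne_bot ha]
  simp [ha', hb']

lemma sub_coe_nonneg {x : EReal} {C : ℝ} (h : (C : EReal) ≤ x) : 0 ≤ x - (C : EReal) := by
  have h2 : (C : EReal) - C ≤ x - C := EReal.sub_le_sub h (le_refl _)
  rwa [← EReal.coe_sub, sub_self, EReal.coe_zero] at h2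

section UE

variable {Y : Type*} {E : (Y → EReal) → EReal} (hE : IsUpperExpectation E)
include hE

lemma E_const (c : ℝ) : E (fun _ => (c : EReal)) = c := hE.1 c

lemma E_ge {g : Y → EReal} {r : ℝ} (hg : ∀ y, (r : EReal) ≤ g y) : (r : EReal) ≤ E g := by
  have h := hE.2.2.2.1 (fun _ => (r : EReal)) g ⟨r, fun _ => le_refl _⟩ ⟨r, hg⟩ hg
  rwa [E_const hE] at h

lemma E_nonneg {g : Y → EReal} (hg : ∀ y, 0 ≤ g y) : 0 ≤ E g := by
  have h : ((0 : ℝ) : EReal) ≤ E g := E_ge hE (fun y => by simpa using hg y)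
  simpa using h

lemma E_ne_bot {g : Y → EReal} (hg : BddBelowF g) : E g ≠ ⊥ := by
  obtain ⟨r, hr⟩ := hg; exact ne_bot_of_real_le (E_ge hE hr)

lemma E_const_add {g : Y → EReal} (hg : BddBelowF g) (r : ℝ) :
    E (fun y => (r : EReal) + g y) ≤ (r : EReal) + E g := by
  obtain ⟨B, hB⟩ := hg
  have h2 := hE.2.1 (fun _ => (r : EReal)) g ⟨r, fun _ => le_refl _⟩ ⟨B, hB⟩
  rw [E_const hE] at h2
  have e1 : (fun y => eadd ((r : EReal)) (g y)) = fun y => (r : EReal) + g y := by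
    funext y; exact eadd_eq_add (by simp) (ne_bot_of_real_le (hB y))
  rw [e1] at h2
  calc E (fun y => (r : EReal) + g y) ≤ eadd (r : EReal) (E g) := h2
    _ = (r : EReal) + E g := eadd_eq_add (by simp) (E_ne_bot hE ⟨B, hB⟩)

lemma E_smul {g : Y → EReal} (hg : BddBelowF g) {c : ℝ} (hc : 0 < c) :
    E (fun y => (c : EReal) * g y) = (c : EReal) * E g := hE.2.2.1 c hc g hg

lemma E_mono {g h : Y → EReal} (hg : BddBelowF g) (hh : BddBelowF h)
    (hle : ∀ y, g y ≤ h y) : E g ≤ E h := hE.2.2.2.1 g h hg hh hle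

lemma E_add_le {g h : Y → EReal} (hg : ∀ y, 0 ≤ g y) (hh : ∀ y, 0 ≤ h y) :
    E (fun y => g y + h y) ≤ E g + E h := by
  have hg' : BddBelowF g := ⟨0, fun y => by simpa using hg y⟩
  have hh' : BddBelowF h := ⟨0, fun y => by simpa using hh y⟩
  have h2 := hE.2.1 g h hg' hh'
  have e1 : (fun y => eadd (g y) (h y)) = fun y => g y + h y := by
    funext y; exact eadd_eq_add (nonneg_ne_bot (hg y)) (nonneg_ne_bot (hh y))
  rw [e1] at h2
  calc E (fun y => g y + h y) ≤ eadd (E g) (E h) := h2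
    _ = E g + E h := eadd_eq_add (nonneg_ne_bot (E_nonneg hE hg)) (nonneg_ne_bot (E_nonneg hE hh))

end UE


section Tree

variable {X : Type*} [Fintype X] [Nonempty X]

@[simp] lemma pfx_length (ω : ℕ → X) (n : ℕ) : (pfx ω n).length = n := by simp [pfx]

lemma pfx_succ (ω : ℕ → X) (n : ℕ) : pfx ω (n + 1) = pfx ω n ++ [ω n] := by
  show List.ofFn (fun i : Fin (n + 1) => ω i) = _
  rw [List.ofFn_succ']
  simp [pfx, List.concat_eq_append]

lemma pfx_prefix (ω : ℕ → X) {m n : ℕ} (h : m ≤ n) : pfx ω m <+: pfx ω n := by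
  induction n with
  | zero => have : m = 0 := Nat.le_zero.mp h; subst this; exact List.prefix_refl _
  | succ n ih =>
    rcases Nat.lt_or_ge m (n + 1) with h' | h'
    · exact (ih (Nat.lt_succ_iff.mp h')).trans (by rw [pfx_succ]; exact List.prefix_append _ _)
    · have : m = n + 1 := le_antisymm h h'
      subst this; exact List.prefix_refl _

lemma pfx_eq_of_prefix {ω : ℕ → X} {t : List X} {n : ℕ} (h : t <+: pfx ω n) :
    pfx ω t.length = t := by
  have hlen : t.length ≤ n := by simpa using h.length_le
  have h1 : pfx ω t.length <+: pfx ω n := pfx_prefix ω hlen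
  have h2 : pfx ω t.length <+: t := List.prefix_of_prefix_length_le h1 h (by simp)
  exact h2.eq_of_length (by simp)

lemma mem_Gamma_of_prefix {t u : List X} (h : t <+: u) {ω : ℕ → X}
    (hω : ω ∈ Gamma u) : ω ∈ Gamma t := by
  have hω' : pfx ω u.length = u := hω
  have h2 : t <+: pfx ω u.length := by rwa [hω']
  exact pfx_eq_of_prefix h2

lemma s_prefix_pfx {s : List X} {ω : ℕ → X} (hω : ω ∈ Gamma s) {n : ℕ}
    (hn : s.length ≤ n) : s <+: pfx ω n := by
  have hω' : pfx ω s.length = s := hω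
  rw [← hω']; exact pfx_prefix ω hn

variable (Q : List X → (X → EReal) → EReal) (f : (ℕ → X) → EReal)

def Wit (t : List X) (M : List X → EReal) : Prop :=
  IsSupermartingale Q M ∧ BddBelowP M ∧ ∀ ω ∈ Gamma t, f ω ≤ liminfP M ω

lemma upExp_le_wit {t u : List X} {M : List X → EReal} (h : Wit Q f t M) (hu : t <+: u) :
    upExp Q f u ≤ M u :=
  sInf_le ⟨M, h.1, h.2.1, fun ω hω => h.2.2 ω (mem_Gamma_of_prefix hu hω), rfl⟩

lemma exists_wit_lt {t : List X} {x : EReal} (h : upExp Q f t < x) :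
    ∃ M, Wit Q f t M ∧ M t < x := by
  obtain ⟨y, hy, hyx⟩ := sInf_lt_iff.mp h
  obtain ⟨M, h1, h2, h3, h4⟩ := hy
  exact ⟨M, ⟨h1, h2, h3⟩, h4 ▸ hyx⟩

variable (hQ : ∀ t : List X, IsUpperExpectation (Q t))
include hQ

lemma exists_min_child {M : List X → EReal} (hM : IsSupermartingale Q M)
    (hB : BddBelowP M) (t : List X) : ∃ x : X, M (t ++ [x]) ≤ M t := by
  obtain ⟨B, hB⟩ := hB
  obtain ⟨x₀, -, hx₀⟩ := Finset.exists_min_image Finset.univ (fun x : X => M (t ++ [x]))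
    ⟨Classical.arbitrary X, Finset.mem_univ _⟩
  refine ⟨x₀, ?_⟩
  rcases eq_or_ne (M (t ++ [x₀])) ⊤ with htop | hne
  · have hall : ∀ x : X, M (t ++ [x]) = ⊤ :=
      fun x => top_le_iff.mp (htop ▸ hx₀ x (Finset.mem_univ x))
  -- M t = ⊤
    have h1 : ∀ r : ℝ, (r : EReal) ≤ M t := fun r =>
      le_trans (E_ge (hQ t) (fun x => by rw [hall x]; exact le_top)) (hM t)
    have htop' : M t = ⊤ := by
      by_contra hne'
      obtain ⟨r, hr1, hr2⟩ := EReal.exists_between_coe_real (lt_top_iff_ne_top.mpr hne')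
      exact absurd (h1 r) (not_le.mpr hr1)
    rw [htop, htop']
  · have hrr : ((M (t ++ [x₀])).toReal : EReal) = M (t ++ [x₀]) :=
      EReal.coe_toReal hne (ne_bot_of_real_le (hB _))
    calc M (t ++ [x₀]) = _ := hrr.symm
      _ ≤ Q t (fun x => M (t ++ [x])) :=
        E_ge (hQ t) (fun x => hrr.le.trans (hx₀ x (Finset.mem_univ x)))
      _ ≤ M t := hM t

lemma exists_descending_path {M : List X → EReal} (hM : IsSupermartingale Q M)
    (hB : BddBelowP M) (u : List X) : ∃ ω ∈ Gamma u, liminfP M ω ≤ M u := by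
  classical
  choose c hc using exists_min_child Q hQ hM hB
  set seq : ℕ → List X := fun n => Nat.rec u (fun _ t => t ++ [c t]) n with hseq
  have seq_zero : seq 0 = u := rfl
  have seq_succ : ∀ n, seq (n + 1) = seq n ++ [c (seq n)] := fun n => rfl
  have seq_len : ∀ n, (seq n).length = u.length + n := by
    intro n; induction n with
    | zero => simp [seq_zero]
    | succ n ih => rw [seq_succ, List.length_append, ih]; simp; omega
  have seq_mono : ∀ {m n : ℕ}, m ≤ n → seq m <+: seq n := by
    intro m n h; induction n with
    | zero => have : m = 0 := Nat.le_zero.mp h; subst this; exact List.prefix_refl _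
    | succ n ih =>
      rcases Nat.lt_or_ge m (n + 1) with h' | h'
      · exact (ih (Nat.lt_succ_iff.mp h')).trans (by rw [seq_succ]; exact List.prefix_append _ _)
      · have : m = n + 1 := le_antisymm h h'; subst this; exact List.prefix_refl _
  have seq_dec : ∀ n, M (seq n) ≤ M u := by
    intro n; induction n with
    | zero => exact le_refl _
    | succ n ih => exact le_trans (by rw [seq_succ]; exact hc (seq n)) ih
  set ω : ℕ → X := fun i => (seq (i + 1)).getD i (Classical.arbitrary X) with hω
  have key : ∀ k, pfx ω (u.length + k) = seq k := by
    intro k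
    apply List.ext_getElem (by rw [pfx_length, seq_len])
    intro i h1 h2
    have e1 : (pfx ω (u.length + k))[i] = ω i := by simp [pfx]
    rw [e1]
    have hi : i < (seq (i + 1)).length := by have := seq_len (i + 1); omega
    show (seq (i + 1)).getD i (Classical.arbitrary X) = (seq k)[i]
    rw [List.getD_eq_getElem _ _ hi]
    rcases Nat.le_total (i + 1) k with h' | h'
    · exact (seq_mono h').getElem hi
    · exact ((seq_mono h').getElem h2).symm
  refine ⟨ω, ?_, ?_⟩
  · show pfx ω u.length = u
    have h0 := key 0; simpa using h0.trans seq_zero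
  · apply Filter.liminf_le_of_frequently_le'
    apply Filter.Eventually.frequently
    rw [Filter.eventually_atTop]
    refine ⟨u.length, fun n hn => ?_⟩
    have hn' : n = u.length + (n - u.length) := by omega
    rw [hn', key]; exact seq_dec _

variable {C : ℝ} (hfC : ∀ ω, (C : EReal) ≤ f ω)
include hfC

lemma le_upExp (u : List X) : (C : EReal) ≤ upExp Q f u := by
  apply le_sInf; rintro y ⟨M, h1, h2, h3, rfl⟩
  obtain ⟨ω, hω, hlim⟩ := exists_descending_path Q hQ h1 h2 u
  exact le_trans (hfC ω) (le_trans (h3 ω hω) hlim)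

lemma wit_ge {t u : List X} {M : List X → EReal} (h : Wit Q f t M) (htu : t <+: u) :
    (C : EReal) ≤ M u :=
  (le_upExp Q f hQ hfC u).trans (upExp_le_wit Q f h htu)

end Tree

/-! ### The doubling-strategy construction -/

inductive PState (X : Type*) where
  | idle (K : ℝ)
  | active (t : List X) (K : ℝ)
  | top

section Constr

variable {X : Type*} [Fintype X] [Nonempty X]
variable (Q : List X → (X → EReal) → EReal) (f : (ℕ → X) → EReal) (C a b : ℝ) (s : List X)

def pick (t : List X) : List X → EReal :=
  if h : ∃ M, Wit Q f t M ∧ M t < (a : EReal) then h.choose else fun _ => ⊤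

lemma pick_spec {t : List X} (h : upExp Q f t < (a : EReal)) :
    Wit Q f t (pick Q f a t) ∧ pick Q f a t t < (a : EReal) := by
  have hex := exists_wit_lt Q f h
  rw [pick, dif_pos hex]
  exact hex.choose_spec

def arrival (t : List X) (K : ℝ) (v : List X) : PState X :=
  if pick Q f a t v = ⊤ then .top
  else if (b : EReal) ≤ pick Q f a t v then
    .idle (K / 2 + K / (2 * (a - C)) * ((pick Q f a t v).toReal - C))
  else .active t K

def stepSt (u : List X) (st : PState X) (x : X) : PState X :=
  match st with
  | .top => .top
  | .idle K =>
      if upExp Q f u < (a : EReal) ∧ 1 ≤ K then arrival Q f C a b u K (u ++ [x])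
      else .idle K
  | .active t K => arrival Q f C a b t K (u ++ [x])

def go : List X → PState X → List X → PState X
  | _, st, [] => st
  | u, st, x :: v => go (u ++ [x]) (stepSt Q f C a b u st x) v

def St (u : List X) : PState X :=
  if s <+: u then go Q f C a b s (.idle 1) (u.drop s.length) else .idle 1

def Tval (u : List X) : EReal :=
  match St Q f C a b s u with
  | .idle K => (K : EReal)
  | .top => ⊤
  | .active t K =>
      ((K / 2 : ℝ) : EReal) + ((K / (2 * (a - C)) : ℝ) : EReal) * (pick Q f a t u - (C : EReal))

def kappa : PState X → EReal
  | .idle K => (K : EReal)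
  | .active _ K => (K : EReal)
  | .top => ⊤

def rho : ℝ := (1 + (b - C) / (a - C)) / 2

def Inv : PState X → List X → Prop
  | .idle K, _ => 1 ≤ K
  | .top, _ => True
  | .active t K, u => 1 ≤ K ∧ s <+: t ∧ t <+: u ∧ t ≠ u ∧
      upExp Q f t < (a : EReal) ∧ pick Q f a t u < (b : EReal)

lemma go_concat : ∀ (v : List X) (u₀ : List X) (st : PState X) (x : X),
    go Q f C a b u₀ st (v ++ [x]) = stepSt Q f C a b (u₀ ++ v) (go Q f C a b u₀ st v) x := by
  intro v
  induction v with
  | nil => intro u₀ st x; simp [go]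
  | cons y v ih =>
    intro u₀ st x
    show go Q f C a b (u₀ ++ [y]) _ (v ++ [x]) = _
    rw [ih]
    simp [go]

lemma St_self : St Q f C a b s s = .idle 1 := by
  rw [St, if_pos (List.prefix_refl s), List.drop_length]
  rfl

lemma St_not {u : List X} (h : ¬ s <+: u) : St Q f C a b s u = .idle 1 := by
  rw [St, if_neg h]

lemma St_concat {u : List X} (h : s <+: u) (x : X) :
    St Q f C a b s (u ++ [x]) = stepSt Q f C a b u (St Q f C a b s u) x := by
  have h2 : s <+: u ++ [x] := h.trans (List.prefix_append _ _)
  rw [St, if_pos h2, St, if_pos h]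
  have hd : (u ++ [x]).drop s.length = u.drop s.length ++ [x] :=
    List.drop_append_of_le_length (by simpa using h.length_le)
  rw [hd, go_concat]
  congr 1
  exact List.prefix_iff_eq_append.mp h

lemma rho_gt_one (ha : C < a) (hab : a < b) : 1 < rho C a b := by
  have h1 : 0 < a - C := by linarith
  have h2 : 1 < (b - C) / (a - C) := (one_lt_div h1).mpr (by linarith)
  rw [rho]; linarith

lemma ne_concat (u : List X) (x : X) : u ≠ u ++ [x] := by
  intro h
  have := congrArg List.length h
  simp at this

variable (hQ : ∀ t : List X, IsUpperExpectation (Q t)) (hfC : ∀ ω, (C : EReal) ≤ f ω)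
  (ha : C < a) (hab : a < b)
include hQ hfC ha hab

lemma arrival_cases {t v : List X} {K : ℝ} (hK : 1 ≤ K)
    (ht : upExp Q f t < (a : EReal)) (htv : t <+: v) :
    (arrival Q f C a b t K v = .active t K ∧ pick Q f a t v < (b : EReal)) ∨
    arrival Q f C a b t K v = .top ∨
    (∃ K', arrival Q f C a b t K v = .idle K' ∧ rho C a b * K ≤ K') := by
  rw [arrival]
  split_ifs with h1 h2
  · exact .inr (.inl rfl)
  · refine .inr (.inr ⟨_, rfl, ?_⟩)
    have hb' : (b : ℝ) ≤ (pick Q f a t v).toReal := by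
      have h3 := EReal.toReal_le_toReal h2 (EReal.coe_ne_bot b) h1
      simpa using h3
    have hApos : 0 < a - C := by linarith
    have hK0 : (0 : ℝ) < K := by linarith
    have hcm : (0 : ℝ) ≤ K / (2 * (a - C)) := by positivity
    have hmono : K / (2 * (a - C)) * (b - C) ≤ K / (2 * (a - C)) * ((pick Q f a t v).toReal - C) :=
      mul_le_mul_of_nonneg_left (by linarith) hcm
    have e1 : rho C a b * K = K / 2 + K / (2 * (a - C)) * (b - C) := by
      rw [rho]; field_simp
    rw [e1]; linarith
  · exact .inl ⟨rfl, not_le.mp h2⟩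

lemma Inv_step {u : List X} (hs : s <+: u) {st : PState X}
    (hInv : Inv Q f a b s st u) (x : X) :
    Inv Q f a b s (stepSt Q f C a b u st x) (u ++ [x]) := by
  have hrho := rho_gt_one C a b ha hab
  match st with
  | .top => exact trivial
  | .idle K =>
    simp only [stepSt]
    split_ifs with hcond
    · rcases arrival_cases Q f C a b hQ hfC ha hab hcond.2 hcond.1
        (List.prefix_append u [x]) with ⟨h, hlt⟩ | h | ⟨K', h, hK'⟩
      · rw [h]
        exact ⟨hcond.2, hs, List.prefix_append u [x], ne_concat u x, hcond.1, hlt⟩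
      · rw [h]; exact trivial
      · rw [h]
        show 1 ≤ K'
        have hK : 1 ≤ K := hcond.2
        nlinarith
    · exact hInv
  | .active t K =>
    obtain ⟨hK, hst, htu, htne, het, hpb⟩ := hInv
    simp only [stepSt]
    rcases arrival_cases Q f C a b hQ hfC ha hab hK het
      (htu.trans (List.prefix_append u [x])) with ⟨h, hlt⟩ | h | ⟨K', h, hK'⟩
    · rw [h]
      refine ⟨hK, hst, htu.trans (List.prefix_append u [x]), ?_, het, hlt⟩
      intro he
      have h1 := htu.length_le
      have h2 := congrArg List.length he
      simp at h2; omega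
    · rw [h]; exact trivial
    · rw [h]
      show 1 ≤ K'
      nlinarith

lemma Inv_holds : ∀ u : List X, s <+: u → Inv Q f a b s (St Q f C a b s u) u := by
  intro u
  induction u using List.reverseRecOn with
  | nil =>
    intro h
    have hs : s = [] := List.prefix_nil.mp h
    subst hs
    rw [St_self]
    show (1 : ℝ) ≤ 1
    exact le_refl 1
  | append_singleton w x ih =>
    intro h
    rcases List.prefix_concat_iff.mp h with h' | h'
    · rw [← h', St_self]
      show (1 : ℝ) ≤ 1
      exact le_refl 1
    · rw [St_concat Q f C a b s h' x]
      exact Inv_step Q f C a b s hQ hfC ha hab h' (ih h') x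

end Constr

section Constr2

variable {X : Type*} [Fintype X] [Nonempty X]
variable (Q : List X → (X → EReal) → EReal) (f : (ℕ → X) → EReal) (C a b : ℝ) (s : List X)
variable (hQ : ∀ t : List X, IsUpperExpectation (Q t)) (hfC : ∀ ω, (C : EReal) ≤ f ω)
  (ha : C < a) (hab : a < b)
include hQ hfC ha hab

lemma pick_ge {t v : List X} (ht : upExp Q f t < (a : EReal)) (htv : t <+: v) :
    (C : EReal) ≤ pick Q f a t v :=
  wit_ge Q f hQ hfC (pick_spec Q f a ht).1 htv

lemma arrival_val {t v : List X} {K : ℝ} (hK : 1 ≤ K)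
    (ht : upExp Q f t < (a : EReal)) (htv : t <+: v)
    (hSt : St Q f C a b s v = arrival Q f C a b t K v) :
    Tval Q f C a b s v =
      ((K / 2 : ℝ) : EReal) + ((K / (2 * (a - C)) : ℝ) : EReal) * (pick Q f a t v - (C : EReal)) := by
  have hApos : (0 : ℝ) < a - C := by linarith
  have hc : (0 : ℝ) < K / (2 * (a - C)) := div_pos (by linarith) (by linarith)
  rw [arrival] at hSt
  split_ifs at hSt with h1 h2
  · have hT : Tval Q f C a b s v = ⊤ := by simp only [Tval, hSt]
    rw [hT, h1, EReal.top_sub_coe, EReal.coe_mul_top_of_pos hc, EReal.coe_add_top]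
  · have hne_bot : pick Q f a t v ≠ ⊥ := ne_bot_of_real_le h2
    have hT : Tval Q f C a b s v =
        ((K / 2 + K / (2 * (a - C)) * ((pick Q f a t v).toReal - C) : ℝ) : EReal) := by
      simp only [Tval, hSt]
    rw [hT]
    conv_rhs => rw [← EReal.coe_toReal h1 hne_bot]
    rw [← EReal.coe_sub, ← EReal.coe_mul, ← EReal.coe_add]
  · simp only [Tval, hSt]

lemma round_ineq {t u : List X} (ht : upExp Q f t < (a : EReal)) (htu : t <+: u) {K : ℝ}
    (hK : 1 ≤ K) :
    Q u (fun x => ((K / 2 : ℝ) : EReal) +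
        ((K / (2 * (a - C)) : ℝ) : EReal) * (pick Q f a t (u ++ [x]) - (C : EReal)))
      ≤ ((K / 2 : ℝ) : EReal) +
        ((K / (2 * (a - C)) : ℝ) : EReal) * (pick Q f a t u - (C : EReal)) := by
  have hApos : (0 : ℝ) < a - C := by linarith
  have hc : (0 : ℝ) < K / (2 * (a - C)) := div_pos (by linarith) (by linarith)
  have hc' : (0 : EReal) ≤ ((K / (2 * (a - C)) : ℝ) : EReal) := by exact_mod_cast hc.le
  set M := pick Q f a t with hM
  have wit := (pick_spec Q f a ht).1
  have hgx : ∀ x : X, (C : EReal) ≤ M (u ++ [x]) := fun x =>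
    wit_ge Q f hQ hfC wit (htu.trans (List.prefix_append _ _))
  have hsub0 : ∀ x : X, ((0 : ℝ) : EReal) ≤ M (u ++ [x]) - (C : EReal) := fun x => by
    simpa using sub_coe_nonneg (hgx x)
  have hg0 : ∀ x : X,
      ((0 : ℝ) : EReal) ≤ ((K / (2 * (a - C)) : ℝ) : EReal) * (M (u ++ [x]) - (C : EReal)) :=
    fun x => by simpa using mul_nonneg hc' (by simpa using hsub0 x)
  have step1 := E_const_add (hQ u) ⟨0, hg0⟩ (K / 2)
  have step2 : Q u (fun x => ((K / (2 * (a - C)) : ℝ) : EReal) * (M (u ++ [x]) - (C : EReal)))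
      = ((K / (2 * (a - C)) : ℝ) : EReal) * Q u (fun x => M (u ++ [x]) - (C : EReal)) :=
    E_smul (hQ u) ⟨0, hsub0⟩ hc
  have e3 : (fun x : X => M (u ++ [x]) - (C : EReal)) =
      fun x => ((-C : ℝ) : EReal) + M (u ++ [x]) := by
    funext x; rw [EReal.coe_neg, sub_eq_add_neg, add_comm]
  have step3 : Q u (fun x => M (u ++ [x]) - (C : EReal))
      ≤ Q u (fun x => M (u ++ [x])) - (C : EReal) := by
    rw [e3]
    have h4 := E_const_add (hQ u) ⟨C, hgx⟩ (-C)
    calc Q u (fun x => ((-C : ℝ) : EReal) + M (u ++ [x]))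
        ≤ ((-C : ℝ) : EReal) + Q u (fun x => M (u ++ [x])) := h4
      _ = Q u (fun x => M (u ++ [x])) - (C : EReal) := by
          rw [EReal.coe_neg, add_comm, ← sub_eq_add_neg]
  have step4 : Q u (fun x => M (u ++ [x])) ≤ M u := wit.1 u
  have comb : Q u (fun x => M (u ++ [x]) - (C : EReal)) ≤ M u - (C : EReal) :=
    step3.trans (EReal.sub_le_sub step4 (le_refl _))
  calc Q u (fun x => ((K / 2 : ℝ) : EReal) +
        ((K / (2 * (a - C)) : ℝ) : EReal) * (M (u ++ [x]) - (C : EReal)))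
      ≤ ((K / 2 : ℝ) : EReal) +
        Q u (fun x => ((K / (2 * (a - C)) : ℝ) : EReal) * (M (u ++ [x]) - (C : EReal))) := step1
    _ = ((K / 2 : ℝ) : EReal) +
        ((K / (2 * (a - C)) : ℝ) : EReal) * Q u (fun x => M (u ++ [x]) - (C : EReal)) := by
          rw [step2]
    _ ≤ ((K / 2 : ℝ) : EReal) +
        ((K / (2 * (a - C)) : ℝ) : EReal) * (M u - (C : EReal)) :=
          add_le_add (le_refl _) (mul_le_mul_of_nonneg_left comb hc')

lemma Tval_nonneg (u : List X) : 0 ≤ Tval Q f C a b s u := by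
  by_cases hs : s <+: u
  · have hInv := Inv_holds Q f C a b s hQ hfC ha hab u hs
    cases hSt : St Q f C a b s u with
    | idle K =>
      rw [hSt] at hInv
      have hInv' : 1 ≤ K := hInv
      simp only [Tval, hSt]
      exact_mod_cast by linarith
    | active t K =>
      rw [hSt] at hInv
      obtain ⟨hK, hst, htu, -, het, -⟩ := hInv
      simp only [Tval, hSt]
      have h1 : (0 : EReal) ≤ ((K / 2 : ℝ) : EReal) := by exact_mod_cast by linarith
      have h2 : (0 : EReal) ≤ ((K / (2 * (a - C)) : ℝ) : EReal) := by
        have : (0 : ℝ) ≤ K / (2 * (a - C)) := div_nonneg (by linarith) (by linarith)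
        exact_mod_cast this
      exact add_nonneg h1 (mul_nonneg h2 (sub_coe_nonneg
        (pick_ge Q f C a b hQ hfC ha hab het htu)))
    | top => simp only [Tval, hSt]; exact le_top
  · simp only [Tval, St_not Q f C a b s hs]
    exact_mod_cast zero_le_one

lemma Tval_s : Tval Q f C a b s s = 1 := by
  simp only [Tval, St_self]
  exact EReal.coe_one

lemma Tval_superm (u : List X) :
    Q u (fun x => Tval Q f C a b s (u ++ [x])) ≤ Tval Q f C a b s u := by
  have hApos : (0 : ℝ) < a - C := by linarith
  by_cases hs : s <+: u
  · have hInv := Inv_holds Q f C a b s hQ hfC ha hab u hs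
    cases hSt : St Q f C a b s u with
    | top =>
      have hT : Tval Q f C a b s u = ⊤ := by simp only [Tval, hSt]
      rw [hT]; exact le_top
    | idle K =>
      rw [hSt] at hInv
      have hK : (1 : ℝ) ≤ K := hInv
      have hTu : Tval Q f C a b s u = (K : EReal) := by simp only [Tval, hSt]
      by_cases hcond : upExp Q f u < (a : EReal) ∧ 1 ≤ K
      · have hval : (fun x => Tval Q f C a b s (u ++ [x])) = fun x =>
            ((K / 2 : ℝ) : EReal) +
              ((K / (2 * (a - C)) : ℝ) : EReal) * (pick Q f a u (u ++ [x]) - (C : EReal)) := by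
          funext x
          have h2 : St Q f C a b s (u ++ [x]) = arrival Q f C a b u K (u ++ [x]) := by
            rw [St_concat Q f C a b s hs x, hSt]
            simp only [stepSt, if_pos hcond]
          exact arrival_val Q f C a b s hQ hfC ha hab hcond.2 hcond.1
            (List.prefix_append _ _) h2
        rw [hval, hTu]
        have h5 : pick Q f a u u - (C : EReal) ≤ ((a - C : ℝ) : EReal) := by
          have h6 := EReal.sub_le_sub (le_of_lt (pick_spec Q f a hcond.1).2)
            (le_refl (C : EReal))
          rwa [← EReal.coe_sub] at h6
        have hc' : (0 : EReal) ≤ ((K / (2 * (a - C)) : ℝ) : EReal) := by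
          have : (0 : ℝ) ≤ K / (2 * (a - C)) := div_nonneg (by linarith) (by linarith)
          exact_mod_cast this
        have h7 : ((K / (2 * (a - C)) : ℝ) : EReal) * (pick Q f a u u - (C : EReal))
            ≤ ((K / 2 : ℝ) : EReal) := by
          calc ((K / (2 * (a - C)) : ℝ) : EReal) * (pick Q f a u u - (C : EReal))
              ≤ ((K / (2 * (a - C)) : ℝ) : EReal) * ((a - C : ℝ) : EReal) :=
                mul_le_mul_of_nonneg_left h5 hc'
            _ = ((K / (2 * (a - C)) * (a - C) : ℝ) : EReal) := (EReal.coe_mul _ _).symm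
            _ = ((K / 2 : ℝ) : EReal) := by
                congr 1
                field_simp
        calc Q u (fun x => ((K / 2 : ℝ) : EReal) +
              ((K / (2 * (a - C)) : ℝ) : EReal) * (pick Q f a u (u ++ [x]) - (C : EReal)))
            ≤ ((K / 2 : ℝ) : EReal) +
              ((K / (2 * (a - C)) : ℝ) : EReal) * (pick Q f a u u - (C : EReal)) :=
              round_ineq Q f C a b hQ hfC ha hab hcond.1 (List.prefix_refl u) hcond.2
          _ ≤ ((K / 2 : ℝ) : EReal) + ((K / 2 : ℝ) : EReal) := add_le_add (le_refl _) h7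
          _ = (K : EReal) := by
              rw [← EReal.coe_add]
              congr 1
              ring
      · have hval : (fun x => Tval Q f C a b s (u ++ [x])) = fun _ => (K : EReal) := by
          funext x
          have h2 : St Q f C a b s (u ++ [x]) = .idle K := by
            rw [St_concat Q f C a b s hs x, hSt]
            simp only [stepSt, if_neg hcond]
          simp only [Tval, h2]
        rw [hval, hTu, E_const (hQ u)]
    | active t K =>
      rw [hSt] at hInv
      obtain ⟨hK, hst, htu, htne, het, hpb⟩ := hInv
      have hval : (fun x => Tval Q f C a b s (u ++ [x])) = fun x =>
          ((K / 2 : ℝ) : EReal) +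
            ((K / (2 * (a - C)) : ℝ) : EReal) * (pick Q f a t (u ++ [x]) - (C : EReal)) := by
        funext x
        have h2 : St Q f C a b s (u ++ [x]) = arrival Q f C a b t K (u ++ [x]) := by
          rw [St_concat Q f C a b s hs x, hSt]
          simp only [stepSt]
        exact arrival_val Q f C a b s hQ hfC ha hab hK het
          (htu.trans (List.prefix_append _ _)) h2
      have hTu : Tval Q f C a b s u =
          ((K / 2 : ℝ) : EReal) +
            ((K / (2 * (a - C)) : ℝ) : EReal) * (pick Q f a t u - (C : EReal)) := by
        simp only [Tval, hSt]
      rw [hval, hTu]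
      exact round_ineq Q f C a b hQ hfC ha hab het htu hK
  · have hval : (fun x => Tval Q f C a b s (u ++ [x])) = fun _ => ((1 : ℝ) : EReal) := by
      funext x
      by_cases h2 : s <+: u ++ [x]
      · rcases List.prefix_concat_iff.mp h2 with h' | h'
        · rw [← h']
          simp only [Tval, St_self]
        · exact absurd h' hs
      · simp only [Tval, St_not Q f C a b s h2]
    have hTu : Tval Q f C a b s u = ((1 : ℝ) : EReal) := by
      simp only [Tval, St_not Q f C a b s hs]
    rw [hval, hTu, E_const (hQ u)]

end Constr2

lemma exit_time {P : ℕ → Prop} {n : ℕ} (hP : P n) (h : ∃ j, n ≤ j ∧ ¬ P j) :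
    ∃ m, n < m ∧ ¬ P m ∧ ∀ j, n ≤ j → j < m → P j := by
  classical
  have hex : ∃ k, n ≤ k ∧ ¬ P k := h
  have hspec := Nat.find_spec hex
  refine ⟨Nat.find hex, ?_, hspec.2, ?_⟩
  · exact lt_of_le_of_ne hspec.1 (fun he => hspec.2 (he ▸ hP))
  · intro k hk hkm
    by_contra hPk
    exact absurd (Nat.find_min' hex ⟨hk, hPk⟩) (not_le.mpr hkm)

section Diverge

variable {X : Type*} [Fintype X] [Nonempty X]
variable (Q : List X → (X → EReal) → EReal) (f : (ℕ → X) → EReal) (C a b : ℝ) (s : List X)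
variable (hQ : ∀ t : List X, IsUpperExpectation (Q t)) (hfC : ∀ ω, (C : EReal) ≤ f ω)
  (ha : C < a) (hab : a < b)
variable {ω : ℕ → X} (hω : ω ∈ Gamma s)
include hQ hfC ha hab hω

lemma sigma_succ {n : ℕ} (hn : s.length ≤ n) :
    St Q f C a b s (pfx ω (n + 1)) =
      stepSt Q f C a b (pfx ω n) (St Q f C a b s (pfx ω n)) (ω n) := by
  rw [pfx_succ]
  exact St_concat Q f C a b s (s_prefix_pfx hω hn) (ω n)

lemma sigma_base : St Q f C a b s (pfx ω s.length) = .idle 1 := by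
  have h : pfx ω s.length = s := hω
  rw [h, St_self]

lemma growth_active (hbf : (b : EReal) < f ω) {n : ℕ} (hn : s.length ≤ n) {t : List X} {K : ℝ}
    (hσ : St Q f C a b s (pfx ω n) = .active t K) :
    ∃ m, n ≤ m ∧ ((rho C a b * K : ℝ) : EReal) ≤ kappa (St Q f C a b s (pfx ω m)) := by
  have hInv := Inv_holds Q f C a b s hQ hfC ha hab (pfx ω n) (s_prefix_pfx hω hn)
  rw [hσ] at hInv
  obtain ⟨hK, hst, htu, -, het, -⟩ := hInv
  have hωt : ω ∈ Gamma t := pfx_eq_of_prefix htu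
  have wit := (pick_spec Q f a het).1
  have hlim : (b : EReal) < liminfP (pick Q f a t) ω := lt_of_lt_of_le hbf (wit.2.2 ω hωt)
  have hev : ∀ᶠ j in Filter.atTop, (b : EReal) < pick Q f a t (pfx ω j) :=
    Filter.eventually_lt_of_lt_liminf hlim
  obtain ⟨N, hN⟩ := Filter.eventually_atTop.mp hev
  set P : ℕ → Prop := fun j => St Q f C a b s (pfx ω j) = .active t K with hP
  have hPn : P n := hσ
  have hnex : ∃ j, n ≤ j ∧ ¬ P j := by
    refine ⟨max n N, le_max_left _ _, ?_⟩
    intro hPj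
    have hInv2 := Inv_holds Q f C a b s hQ hfC ha hab (pfx ω (max n N))
      (s_prefix_pfx hω ((le_max_left n N).trans' hn))
    rw [show St Q f C a b s (pfx ω (max n N)) = .active t K from hPj] at hInv2
    exact absurd hInv2.2.2.2.2.2 (not_lt.mpr (hN _ (le_max_right _ _)).le)
  obtain ⟨m, hm1, hm2, hm3⟩ := exit_time hPn hnex
  obtain ⟨m', rfl⟩ : ∃ m', m = m' + 1 := ⟨m - 1, by omega⟩
  have hPm' : P m' := by
    rcases eq_or_lt_of_le (Nat.lt_succ_iff.mp hm1) with h' | h'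
    · rw [← h']; exact hPn
    · exact hm3 m' (by omega) (by omega)
  have hstep := sigma_succ Q f C a b s hQ hfC ha hab hω (n := m') (by omega)
  rw [show St Q f C a b s (pfx ω m') = .active t K from hPm'] at hstep
  have hstep' : St Q f C a b s (pfx ω (m' + 1)) = arrival Q f C a b t K (pfx ω (m' + 1)) := by
    rw [pfx_succ]
    rw [pfx_succ] at hstep
    rw [hstep]; simp only [stepSt]
  rcases arrival_cases Q f C a b hQ hfC ha hab hK het
    (htu.trans (pfx_prefix ω (show n ≤ m' + 1 by omega))) with ⟨h, -⟩ | h | ⟨K', h, hK'⟩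
  · exact absurd (hstep'.trans h) hm2
  · refine ⟨m' + 1, by omega, ?_⟩
    rw [hstep', h]
    exact le_top
  · refine ⟨m' + 1, by omega, ?_⟩
    rw [hstep', h]
    show ((rho C a b * K : ℝ) : EReal) ≤ ((K' : ℝ) : EReal)
    exact_mod_cast hK'

lemma growth (hfreq : ∃ᶠ j in Filter.atTop, upExp Q f (pfx ω j) < (a : EReal))
    (hbf : (b : EReal) < f ω) {n : ℕ} (hn : s.length ≤ n) :
    ∃ m, n ≤ m ∧ (rho C a b : EReal) * kappa (St Q f C a b s (pfx ω n))
      ≤ kappa (St Q f C a b s (pfx ω m)) := by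
  have hrho := rho_gt_one C a b ha hab
  have hInv := Inv_holds Q f C a b s hQ hfC ha hab (pfx ω n) (s_prefix_pfx hω hn)
  cases hσ : St Q f C a b s (pfx ω n) with
  | top =>
    refine ⟨n, le_refl n, ?_⟩
    rw [hσ]
    exact le_top
  | active t K =>
    obtain ⟨m, hm, hval⟩ := growth_active Q f C a b s hQ hfC ha hab hω hbf hn hσ
    refine ⟨m, hm, ?_⟩
    show (rho C a b : EReal) * ((K : ℝ) : EReal) ≤ _
    rw [← EReal.coe_mul]
    exact hval
  | idle K =>
    rw [hσ] at hInv
    have hK : (1 : ℝ) ≤ K := hInv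
    set P : ℕ → Prop := fun i => St Q f C a b s (pfx ω i) = .idle K with hP
    have hPn : P n := hσ
    have key : ∀ j, n ≤ j → upExp Q f (pfx ω j) < (a : EReal) → P j → ¬ P (j + 1) := by
      intro j hj hja hPj
      have hstep := sigma_succ Q f C a b s hQ hfC ha hab hω (n := j) (by omega)
      rw [show St Q f C a b s (pfx ω j) = .idle K from hPj] at hstep
      have hstep' : St Q f C a b s (pfx ω (j + 1)) =
          arrival Q f C a b (pfx ω j) K (pfx ω (j + 1)) := by
        rw [pfx_succ]
        rw [pfx_succ] at hstep
        rw [hstep]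
        simp only [stepSt, if_pos (⟨hja, hK⟩ : upExp Q f (pfx ω j) < (a : EReal) ∧ 1 ≤ K)]
      rcases arrival_cases Q f C a b hQ hfC ha hab hK hja
        (pfx_prefix ω (Nat.le_succ j)) with ⟨h, -⟩ | h | ⟨K', h, hK'⟩
      · intro hPj1
        cases ((hstep'.trans h).symm.trans hPj1)
      · intro hPj1
        rw [hPj1] at hstep'
        rw [h] at hstep'
        cases hstep'
      · intro hPj1
        rw [hPj1] at hstep'
        rw [h] at hstep'
        have hKK : K = K' := by injection hstep'
        rw [← hKK] at hK'
        nlinarith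
    have hnex : ∃ i, n ≤ i ∧ ¬ P i := by
      obtain ⟨j, hj, hja⟩ := (Filter.frequently_atTop.mp hfreq) n
      by_cases hPj : P j
      · exact ⟨j + 1, by omega, key j hj hja hPj⟩
      · exact ⟨j, hj, hPj⟩
    obtain ⟨m, hm1, hm2, hm3⟩ := exit_time hPn hnex
    obtain ⟨m', rfl⟩ : ∃ m', m = m' + 1 := ⟨m - 1, by omega⟩
    have hPm' : P m' := by
      rcases eq_or_lt_of_le (Nat.lt_succ_iff.mp hm1) with h' | h'
      · rw [← h']; exact hPn
      · exact hm3 m' (by omega) (by omega)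
    have hstep := sigma_succ Q f C a b s hQ hfC ha hab hω (n := m') (by omega)
    rw [show St Q f C a b s (pfx ω m') = .idle K from hPm'] at hstep
    by_cases hcond : upExp Q f (pfx ω m') < (a : EReal) ∧ 1 ≤ K
    · have hstep' : St Q f C a b s (pfx ω (m' + 1)) =
          arrival Q f C a b (pfx ω m') K (pfx ω (m' + 1)) := by
        rw [pfx_succ]
        rw [pfx_succ] at hstep
        rw [hstep]
        simp only [stepSt, if_pos hcond]
      rcases arrival_cases Q f C a b hQ hfC ha hab hK hcond.1
        (pfx_prefix ω (Nat.le_succ m')) with ⟨h, -⟩ | h | ⟨K', h, hK'⟩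
      · obtain ⟨m'', hm'', hval⟩ := growth_active Q f C a b s hQ hfC ha hab hω hbf
          (n := m' + 1) (by omega) (hstep'.trans h)
        refine ⟨m'', by omega, ?_⟩
        show (rho C a b : EReal) * ((K : ℝ) : EReal) ≤ _
        rw [← EReal.coe_mul]
        exact hval
      · refine ⟨m' + 1, by omega, ?_⟩
        rw [hstep', h]
        exact le_top
      · refine ⟨m' + 1, by omega, ?_⟩
        rw [hstep', h]
        show (rho C a b : EReal) * ((K : ℝ) : EReal) ≤ ((K' : ℝ) : EReal)
        rw [← EReal.coe_mul]
        exact_mod_cast hK'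
    · exfalso
      apply hm2
      show St Q f C a b s (pfx ω (m' + 1)) = .idle K
      rw [pfx_succ]
      rw [pfx_succ] at hstep
      rw [hstep]
      simp only [stepSt, if_neg hcond]

lemma kappa_step {n : ℕ} (hn : s.length ≤ n) :
    kappa (St Q f C a b s (pfx ω n)) ≤ kappa (St Q f C a b s (pfx ω (n + 1))) := by
  have hrho := rho_gt_one C a b ha hab
  have hInv := Inv_holds Q f C a b s hQ hfC ha hab (pfx ω n) (s_prefix_pfx hω hn)
  have hstep := sigma_succ Q f C a b s hQ hfC ha hab hω hn
  cases hσ : St Q f C a b s (pfx ω n) with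
  | top =>
    rw [hσ] at hstep
    rw [hstep]
    simp only [stepSt]
    exact le_refl _
  | idle K =>
    rw [hσ] at hInv hstep
    have hK : (1 : ℝ) ≤ K := hInv
    rw [hstep]
    simp only [stepSt]
    split_ifs with hcond
    · rcases arrival_cases Q f C a b hQ hfC ha hab hK hcond.1
        (List.prefix_append _ _) with ⟨h, -⟩ | h | ⟨K', h, hK'⟩
      · rw [h]; exact le_refl _
      · rw [h]; exact le_top
      · rw [h]
        show ((K : ℝ) : EReal) ≤ ((K' : ℝ) : EReal)
        have : K ≤ K' := by nlinarith
        exact_mod_cast this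
    · exact le_refl _
  | active t K =>
    rw [hσ] at hInv hstep
    obtain ⟨hK, hst, htu, -, het, -⟩ := hInv
    rw [hstep]
    simp only [stepSt]
    rcases arrival_cases Q f C a b hQ hfC ha hab hK het
      (htu.trans (List.prefix_append _ _)) with ⟨h, -⟩ | h | ⟨K', h, hK'⟩
    · rw [h]
    · rw [h]; exact le_top
    · rw [h]
      show ((K : ℝ) : EReal) ≤ ((K' : ℝ) : EReal)
      have : K ≤ K' := by nlinarith
      exact_mod_cast this

lemma kappa_mono {m n : ℕ} (hm : s.length ≤ m) (hmn : m ≤ n) :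
    kappa (St Q f C a b s (pfx ω m)) ≤ kappa (St Q f C a b s (pfx ω n)) := by
  induction n with
  | zero =>
    have : m = 0 := Nat.le_zero.mp hmn
    subst this; exact le_refl _
  | succ n ih =>
    rcases Nat.lt_or_ge m (n + 1) with h' | h'
    · exact (ih (Nat.lt_succ_iff.mp h')).trans
        (kappa_step Q f C a b s hQ hfC ha hab hω (hm.trans (Nat.lt_succ_iff.mp h')))
    · have : m = n + 1 := le_antisymm hmn h'
      subst this; exact le_refl _

lemma kappa_pow (hfreq : ∃ᶠ j in Filter.atTop, upExp Q f (pfx ω j) < (a : EReal))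
    (hbf : (b : EReal) < f ω) :
    ∀ k : ℕ, ∃ m, s.length ≤ m ∧ ((rho C a b ^ k : ℝ) : EReal) ≤
      kappa (St Q f C a b s (pfx ω m)) := by
  intro k
  induction k with
  | zero =>
    refine ⟨s.length, le_refl _, ?_⟩
    rw [sigma_base Q f C a b s hQ hfC ha hab hω]
    simp [kappa]
  | succ k ih =>
    obtain ⟨m, hm, hval⟩ := ih
    obtain ⟨m', hm', hval'⟩ := growth Q f C a b s hQ hfC ha hab hω hfreq hbf hm
    refine ⟨m', hm.trans hm', ?_⟩
    have hrho : (0 : ℝ) < rho C a b := by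
      have := rho_gt_one C a b ha hab; linarith
    calc ((rho C a b ^ (k + 1) : ℝ) : EReal)
        = (rho C a b : EReal) * ((rho C a b ^ k : ℝ) : EReal) := by
          rw [← EReal.coe_mul]; norm_cast; ring
      _ ≤ (rho C a b : EReal) * kappa (St Q f C a b s (pfx ω m)) :=
          mul_le_mul_of_nonneg_left hval (by exact_mod_cast hrho.le)
      _ ≤ kappa (St Q f C a b s (pfx ω m')) := hval'

lemma kappa_tendsto_top (hfreq : ∃ᶠ j in Filter.atTop, upExp Q f (pfx ω j) < (a : EReal))
    (hbf : (b : EReal) < f ω) :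
    Filter.Tendsto (fun n => kappa (St Q f C a b s (pfx ω n))) Filter.atTop (𝓝 ⊤) := by
  rw [EReal.tendsto_nhds_top_iff_real]
  intro x
  have hrho := rho_gt_one C a b ha hab
  obtain ⟨k, hk⟩ := pow_unbounded_of_one_lt x hrho
  obtain ⟨m, hm, hval⟩ := kappa_pow Q f C a b s hQ hfC ha hab hω hfreq hbf k
  rw [Filter.eventually_atTop]
  refine ⟨m, fun n hn => ?_⟩
  have h2 := kappa_mono Q f C a b s hQ hfC ha hab hω hm hn
  calc (x : EReal) < ((rho C a b ^ k : ℝ) : EReal) := by exact_mod_cast hk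
    _ ≤ _ := hval.trans h2

lemma Tval_ge_half_kappa (u : List X) (hs : s <+: u) :
    (((1 : ℝ) / 2 : ℝ) : EReal) * kappa (St Q f C a b s u) ≤ Tval Q f C a b s u := by
  have hInv := Inv_holds Q f C a b s hQ hfC ha hab u hs
  cases hσ : St Q f C a b s u with
  | top =>
    have hT : Tval Q f C a b s u = ⊤ := by simp only [Tval, hσ]
    rw [hT]
    show (((1 : ℝ) / 2 : ℝ) : EReal) * ⊤ ≤ ⊤
    exact le_top
  | idle K =>
    rw [hσ] at hInv
    have hK : (1 : ℝ) ≤ K := hInv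
    have hT : Tval Q f C a b s u = (K : EReal) := by simp only [Tval, hσ]
    rw [hT]
    show (((1 : ℝ) / 2 : ℝ) : EReal) * ((K : ℝ) : EReal) ≤ ((K : ℝ) : EReal)
    rw [← EReal.coe_mul]
    have : (1 : ℝ) / 2 * K ≤ K := by linarith
    exact_mod_cast this
  | active t K =>
    rw [hσ] at hInv
    obtain ⟨hK, hst, htu, -, het, -⟩ := hInv
    have hT : Tval Q f C a b s u = ((K / 2 : ℝ) : EReal) +
        ((K / (2 * (a - C)) : ℝ) : EReal) * (pick Q f a t u - (C : EReal)) := by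
      simp only [Tval, hσ]
    rw [hT]
    have h1 : (((1 : ℝ) / 2 : ℝ) : EReal) * ((K : ℝ) : EReal) = ((K / 2 : ℝ) : EReal) := by
      rw [← EReal.coe_mul]; norm_cast; ring
    show (((1 : ℝ) / 2 : ℝ) : EReal) * ((K : ℝ) : EReal) ≤ _
    rw [h1]
    nth_rewrite 1 [← add_zero ((K / 2 : ℝ) : EReal)]
    apply add_le_add (le_refl _)
    apply mul_nonneg
    · have : (0 : ℝ) ≤ K / (2 * (a - C)) := div_nonneg (by linarith) (by linarith)
      exact_mod_cast this
    · exact sub_coe_nonneg (pick_ge Q f C a b hQ hfC ha hab het htu)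

lemma Tval_tendsto_top (hfreq : ∃ᶠ j in Filter.atTop, upExp Q f (pfx ω j) < (a : EReal))
    (hbf : (b : EReal) < f ω) :
    Filter.Tendsto (fun n => Tval Q f C a b s (pfx ω n)) Filter.atTop (𝓝 ⊤) := by
  rw [EReal.tendsto_nhds_top_iff_real]
  intro x
  have h1 := (EReal.tendsto_nhds_top_iff_real.mp
    (kappa_tendsto_top Q f C a b s hQ hfC ha hab hω hfreq hbf)) (2 * (x + 1))
  have h2 : ∀ᶠ n in Filter.atTop, s.length ≤ n := Filter.eventually_atTop.mpr ⟨_, fun n h => h⟩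
  filter_upwards [h1, h2] with n hn hn'
  have h3 := Tval_ge_half_kappa Q f C a b s hQ hfC ha hab hω (pfx ω n) (s_prefix_pfx hω hn')
  calc (x : EReal) < ((x + 1 : ℝ) : EReal) := by exact_mod_cast lt_add_one x
    _ = (((1 : ℝ) / 2 : ℝ) : EReal) * ((2 * (x + 1) : ℝ) : EReal) := by
        rw [← EReal.coe_mul]; norm_cast; ring
    _ ≤ (((1 : ℝ) / 2 : ℝ) : EReal) * kappa (St Q f C a b s (pfx ω n)) := by
        apply mul_le_mul_of_nonneg_left hn.le
        norm_num
    _ ≤ Tval Q f C a b s (pfx ω n) := h3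

end Diverge

section Glue

variable {X : Type*} [Fintype X] [Nonempty X]
variable (Q : List X → (X → EReal) → EReal) (f : (ℕ → X) → EReal) (C : ℝ) (s : List X)

def TT (i : ℕ) : List X → EReal :=
  let p := (Denumerable.eqv (ℚ × ℚ)).symm i
  if C < (p.1 : ℝ) ∧ (p.1 : ℝ) < (p.2 : ℝ) then Tval Q f C (p.1 : ℝ) (p.2 : ℝ) s
  else fun _ => ((1 : ℝ) : EReal)

def SS (N : ℕ) (u : List X) : EReal :=
  ∑ i ∈ Finset.range N, (((1 / 2 : ℝ) ^ (i + 1) : ℝ) : EReal) * TT Q f C s i u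

def Tfin (u : List X) : EReal := ⨆ N, SS Q f C s N u

variable (hQ : ∀ t : List X, IsUpperExpectation (Q t)) (hfC : ∀ ω, (C : EReal) ≤ f ω)
include hQ hfC

lemma TT_nonneg (i : ℕ) (u : List X) : 0 ≤ TT Q f C s i u := by
  rw [TT]
  split_ifs with h
  · exact Tval_nonneg Q f C _ _ s hQ hfC h.1 h.2 u
  · exact_mod_cast zero_le_one

lemma TT_superm (i : ℕ) (u : List X) :
    Q u (fun x => TT Q f C s i (u ++ [x])) ≤ TT Q f C s i u := by
  rw [TT]
  split_ifs with h
  · exact Tval_superm Q f C _ _ s hQ hfC h.1 h.2 u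
  · rw [E_const (hQ u)]

lemma TT_s (i : ℕ) : TT Q f C s i s = ((1 : ℝ) : EReal) := by
  rw [TT]
  split_ifs with h
  · rw [Tval_s Q f C _ _ s hQ hfC h.1 h.2]
    exact EReal.coe_one.symm
  · rfl

lemma SS_succ (N : ℕ) (u : List X) : SS Q f C s (N + 1) u =
    SS Q f C s N u + (((1 / 2 : ℝ) ^ (N + 1) : ℝ) : EReal) * TT Q f C s N u := by
  simp only [SS]
  rw [Finset.sum_range_succ]

lemma SS_nonneg (N : ℕ) (u : List X) : 0 ≤ SS Q f C s N u := by
  apply Finset.sum_nonneg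
  intro i _
  exact mul_nonneg (by exact_mod_cast by positivity) (TT_nonneg Q f C s hQ hfC i u)

lemma SS_mono (u : List X) : Monotone (fun N => SS Q f C s N u) := by
  apply monotone_nat_of_le_succ
  intro N
  show SS Q f C s N u ≤ SS Q f C s (N + 1) u
  rw [SS_succ Q f C s hQ hfC]
  exact le_add_of_nonneg_right
    (mul_nonneg (by exact_mod_cast by positivity) (TT_nonneg Q f C s hQ hfC N u))

lemma SS_superm (N : ℕ) (u : List X) :
    Q u (fun x => SS Q f C s N (u ++ [x])) ≤ SS Q f C s N u := by
  induction N with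
  | zero =>
    have h0 : (fun x : X => SS Q f C s 0 (u ++ [x])) = fun _ => ((0 : ℝ) : EReal) := by
      funext x; simp [SS]
    rw [h0, E_const (hQ u)]
    rw [show SS Q f C s 0 u = 0 by simp [SS]]
    exact_mod_cast le_refl (0 : EReal)
  | succ N ih =>
    have hw : (0 : ℝ) < (1 / 2 : ℝ) ^ (N + 1) := by positivity
    have hsplit : (fun x : X => SS Q f C s (N + 1) (u ++ [x])) = fun x =>
        SS Q f C s N (u ++ [x]) +
          (((1 / 2 : ℝ) ^ (N + 1) : ℝ) : EReal) * TT Q f C s N (u ++ [x]) := by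
      funext x; rw [SS_succ Q f C s hQ hfC]
    rw [hsplit]
    have h1 := E_add_le (hQ u) (g := fun x => SS Q f C s N (u ++ [x]))
      (h := fun x => (((1 / 2 : ℝ) ^ (N + 1) : ℝ) : EReal) * TT Q f C s N (u ++ [x]))
      (fun x => SS_nonneg Q f C s hQ hfC N (u ++ [x]))
      (fun x => mul_nonneg (by exact_mod_cast hw.le) (TT_nonneg Q f C s hQ hfC N (u ++ [x])))
    have h2 : Q u (fun x => (((1 / 2 : ℝ) ^ (N + 1) : ℝ) : EReal) * TT Q f C s N (u ++ [x]))
        = (((1 / 2 : ℝ) ^ (N + 1) : ℝ) : EReal) * Q u (fun x => TT Q f C s N (u ++ [x])) :=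
      E_smul (hQ u) ⟨0, fun x => by simpa using TT_nonneg Q f C s hQ hfC N (u ++ [x])⟩ hw
    calc Q u (fun x => SS Q f C s N (u ++ [x]) +
          (((1 / 2 : ℝ) ^ (N + 1) : ℝ) : EReal) * TT Q f C s N (u ++ [x]))
        ≤ Q u (fun x => SS Q f C s N (u ++ [x])) +
          Q u (fun x => (((1 / 2 : ℝ) ^ (N + 1) : ℝ) : EReal) * TT Q f C s N (u ++ [x])) := h1
      _ ≤ SS Q f C s N u + (((1 / 2 : ℝ) ^ (N + 1) : ℝ) : EReal) *
            (TT Q f C s N u) := by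
          apply add_le_add ih
          rw [h2]
          exact mul_le_mul_of_nonneg_left (TT_superm Q f C s hQ hfC N u)
            (by exact_mod_cast hw.le)
      _ = SS Q f C s (N + 1) u := (SS_succ Q f C s hQ hfC N u).symm

lemma Tfin_nonneg (u : List X) : 0 ≤ Tfin Q f C s u :=
  (SS_nonneg Q f C s hQ hfC 0 u).trans (le_iSup (fun N => SS Q f C s N u) 0)

lemma Tfin_superm (u : List X) :
    Q u (fun x => Tfin Q f C s (u ++ [x])) ≤ Tfin Q f C s u := by
  have htend : ∀ y : X, Filter.Tendsto (fun N => SS Q f C s N (u ++ [y])) Filter.atTop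
      (𝓝 (Tfin Q f C s (u ++ [y]))) :=
    fun y => tendsto_atTop_iSup (SS_mono Q f C s hQ hfC (u ++ [y]))
  have h5 := (hQ u).2.2.2.2 (fun N x => SS Q f C s N (u ++ [x]))
    (fun x => Tfin Q f C s (u ++ [x]))
    (fun N x => SS_nonneg Q f C s hQ hfC N (u ++ [x]))
    (fun N x => SS_mono Q f C s hQ hfC (u ++ [x]) (Nat.le_succ N))
    htend
  apply le_of_tendsto h5
  apply Filter.Eventually.of_forall
  intro N
  exact (SS_superm Q f C s hQ hfC N u).trans (le_iSup (fun N => SS Q f C s N u) N)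

lemma SS_s (N : ℕ) : SS Q f C s N s = ((1 - (1 / 2 : ℝ) ^ N : ℝ) : EReal) := by
  induction N with
  | zero => simp [SS]
  | succ N ih =>
    rw [SS_succ Q f C s hQ hfC, ih, TT_s Q f C s hQ hfC N]
    norm_cast
    ring

lemma Tfin_s : Tfin Q f C s s = 1 := by
  have h1 : Filter.Tendsto (fun N => SS Q f C s N s) Filter.atTop (𝓝 ((1 : ℝ) : EReal)) := by
    simp only [SS_s Q f C s hQ hfC]
    rw [EReal.tendsto_coe]
    have h2 : Filter.Tendsto (fun N : ℕ => (1 / 2 : ℝ) ^ N) Filter.atTop (𝓝 0) :=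
      tendsto_pow_atTop_nhds_zero_of_lt_one (by norm_num) (by norm_num)
    have h3 := h2.const_sub 1
    simpa using h3
  have h2 := tendsto_atTop_iSup (SS_mono Q f C s hQ hfC s)
  have := tendsto_nhds_unique h2 h1
  rw [Tfin, this, EReal.coe_one]

lemma Tfin_ge (i : ℕ) (u : List X) :
    (((1 / 2 : ℝ) ^ (i + 1) : ℝ) : EReal) * TT Q f C s i u ≤ Tfin Q f C s u := by
  have h1 : (((1 / 2 : ℝ) ^ (i + 1) : ℝ) : EReal) * TT Q f C s i u ≤ SS Q f C s (i + 1) u :=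
    Finset.single_le_sum (f := fun j => (((1 / 2 : ℝ) ^ (j + 1) : ℝ) : EReal) * TT Q f C s j u)
      (fun j _ => mul_nonneg (by exact_mod_cast by positivity)
        (TT_nonneg Q f C s hQ hfC j u))
      (Finset.self_mem_range_succ i)
  exact h1.trans (le_iSup (fun N => SS Q f C s N u) (i + 1))

end Glue

end Levy01

open Levy01


/-- Lévy's zero-one law. For any bounded below global variable `f` and any
situation `s`, the event `{ω : liminf_n E_V(f|ω^n) ≥ f(ω)}` is strictly almost sure
within `Γ(s)`. -/
theorem stmt10 {X : Type*} [Fintype X] [Nonempty X]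
    (Q : List X → (X → EReal) → EReal) (hQ : ∀ s : List X, IsUpperExpectation (Q s))
    (f : (ℕ → X) → EReal) (hf : BddBelowF f) (s : List X) :
    StrictlyAS Q s
      {ω | f ω ≤ Filter.liminf (fun n => upExp Q f (pfx ω n)) atTop} := by
    classical
  obtain ⟨C, hfC⟩ := hf
  refine ⟨Tfin Q f C s, Tfin_superm Q f C s hQ hfC, Tfin_nonneg Q f C s hQ hfC,
    Tfin_s Q f C s hQ hfC, ?_⟩
  intro ω hω hA
  have hL : Filter.liminf (fun n => upExp Q f (pfx ω n)) Filter.atTop < f ω := not_le.mp hA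
  set L := Filter.liminf (fun n => upExp Q f (pfx ω n)) Filter.atTop with hLdef
  have hCL : (C : EReal) ≤ L :=
    Filter.le_liminf_of_le (by isBoundedDefault)
      (Filter.Eventually.of_forall (fun n => le_upExp Q f hQ hfC (pfx ω n)))
  obtain ⟨z, hz1, hz2⟩ := EReal.exists_between_coe_real hL
  obtain ⟨z', hz'1, hz'2⟩ := EReal.exists_between_coe_real hz1
  obtain ⟨q, hq1, hq2⟩ := exists_rat_btwn (EReal.coe_lt_coe_iff.mp hz'2)
  obtain ⟨r, hr1, hr2⟩ := exists_rat_btwn hq2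
  have hCq : C < (q : ℝ) := lt_trans (EReal.coe_lt_coe_iff.mp (hCL.trans_lt hz'1)) hq1
  have hqr : (q : ℝ) < (r : ℝ) := hr1
  set i := (Denumerable.eqv (ℚ × ℚ)) (q, r) with hidef
  have hTT : TT Q f C s i = Tval Q f C (q : ℝ) (r : ℝ) s := by
    rw [TT, hidef, Equiv.symm_apply_apply]
    rw [if_pos ⟨hCq, hqr⟩]
  have hfr : ∃ᶠ n in Filter.atTop, upExp Q f (pfx ω n) < ((q : ℝ) : EReal) := by
    apply Filter.frequently_lt_of_liminf_lt (by isBoundedDefault)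
    calc L < (z' : EReal) := hz'1
      _ < ((q : ℝ) : EReal) := by exact_mod_cast hq1
  have hbf : ((r : ℝ) : EReal) < f ω :=
    lt_trans (by exact_mod_cast hr2) hz2
  have hdiv := Tval_tendsto_top Q f C (q : ℝ) (r : ℝ) s hQ hfC hCq hqr hω hfr hbf
  rw [EReal.tendsto_nhds_top_iff_real]
  intro x
  set w : ℝ := (1 / 2 : ℝ) ^ (i + 1) with hwdef
  have hw : (0 : ℝ) < w := by positivity
  have h1 := (EReal.tendsto_nhds_top_iff_real.mp hdiv) ((x + 1) / w)
  filter_upwards [h1] with n hn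
  have h2 : ((x + 1 : ℝ) : EReal) ≤ (w : EReal) * TT Q f C s i (pfx ω n) := by
    rw [hTT]
    calc ((x + 1 : ℝ) : EReal) = ((w * ((x + 1) / w) : ℝ) : EReal) := by
          rw [mul_div_cancel₀ _ (ne_of_gt hw)]
      _ = (w : EReal) * (((x + 1) / w : ℝ) : EReal) := EReal.coe_mul _ _
      _ ≤ (w : EReal) * Tval Q f C (q : ℝ) (r : ℝ) s (pfx ω n) :=
          mul_le_mul_of_nonneg_left hn.le (by exact_mod_cast hw.le)
  calc (x : EReal) < ((x + 1 : ℝ) : EReal) := by exact_mod_cast lt_add_one x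
    _ ≤ (w : EReal) * TT Q f C s i (pfx ω n) := h2
    _ ≤ Tfin Q f C s (pfx ω n) := Tfin_ge Q f C s hQ hfC i (pfx ω n)
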